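/- Let ABC be an acute triangle with orthocenter H, and let A', B', C' be the feet of the altitudes from A, B, C (the orthic triangle). Then for any other triangle A''B''C'' inscribed in ABC with A'' on segment BC, B'' on segment CA, C'' on segment AB, the perimeter of the orthic triangle is at most the perimeter of A''B''C'': dist(A',B') + dist(B',C') + dist(C',A') ≤ dist(A'',B'') + dist(B'',C'') + dist(C'',A''). -/

import Mathlib

open EuclideanGeometry

private lemma norm_eq_of_sq {E : Type*} [SeminormedAddCommGroup E] {x : E} {y : ℝ}
    (hy : 0 ≤ y) (h : ‖x‖ ^ 2 = y ^ 2) : ‖x‖ = y := by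
  have h1 : ‖x‖ = Real.sqrt (‖x‖ ^ 2) := (Real.sqrt_sq (norm_nonneg x)).symm
  rw [h1, h, Real.sqrt_sq hy]

private lemma inner_comb {E : Type*} [NormedAddCommGroup E] [InnerProductSpace ℝ E]
    (x y : E) (α β γ δ : ℝ) :
    (inner ℝ (α•x + β•y) (γ•x + δ•y) : ℝ)
      = α*γ*(inner ℝ x x : ℝ) + (α*δ+β*γ)*(inner ℝ x y : ℝ) + β*δ*(inner ℝ y y : ℝ) := by
  simp only [inner_add_left, inner_add_right, real_inner_smul_left, real_inner_smul_right,
    real_inner_comm y x]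
  ring

private lemma key2d (u v x : EuclideanSpace ℝ (Fin 2)) :
    (inner ℝ ((2*(inner ℝ x u : ℝ)) • u - (inner ℝ u u : ℝ) • x)
      ((2*(inner ℝ x v : ℝ)) • v - (inner ℝ v v : ℝ) • x) : ℝ)
      = (inner ℝ x x : ℝ) * (2*(inner ℝ u v : ℝ)^2 - (inner ℝ u u : ℝ)*(inner ℝ v v : ℝ)) := by
  simp [PiLp.inner_apply, Fin.sum_univ_two, PiLp.sub_apply, PiLp.smul_apply,
    RCLike.inner_apply, smul_eq_mul, EuclideanSpace.real_norm_sq_eq]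
  ring

private lemma inner_pos_of_angle_lt {E : Type*} [NormedAddCommGroup E] [InnerProductSpace ℝ E]
    {x y : E} (h : InnerProductGeometry.angle x y < Real.pi / 2) : 0 < (inner ℝ x y : ℝ) := by
  have hx : x ≠ 0 := by
    rintro rfl; rw [InnerProductGeometry.angle_zero_left] at h; linarith
  have hy : y ≠ 0 := by
    rintro rfl; rw [InnerProductGeometry.angle_zero_right] at h; linarith
  have hcos : 0 < Real.cos (InnerProductGeometry.angle x y) := by
    apply Real.cos_pos_of_mem_Ioo
    constructor
    · have := InnerProductGeometry.angle_nonneg x y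
      have := Real.pi_pos
      linarith
    · exact h
  rw [InnerProductGeometry.cos_angle] at hcos
  have hn : 0 < ‖x‖ * ‖y‖ := mul_pos (norm_pos_iff.mpr hx) (norm_pos_iff.mpr hy)
  have h2 := mul_pos hcos hn
  rwa [div_mul_cancel₀ _ hn.ne'] at h2

set_option maxHeartbeats 1000000 in
theorem stmt_19 (A B C A' B' C' : EuclideanSpace ℝ (Fin 2))
    (hABC : AffineIndependent ℝ ![A, B, C])
    (hacuteA : ∠ B A C < Real.pi / 2)
    (hacuteB : ∠ A B C < Real.pi / 2)
    (hacuteC : ∠ B C A < Real.pi / 2)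
    -- feet of the altitudes
    (hA'mem : A' ∈ affineSpan ℝ ({B, C} : Set (EuclideanSpace ℝ (Fin 2))))
    (hA'perp : (inner ℝ (A - A') (C - B) : ℝ) = 0)
    (hB'mem : B' ∈ affineSpan ℝ ({C, A} : Set (EuclideanSpace ℝ (Fin 2))))
    (hB'perp : (inner ℝ (B - B') (A - C) : ℝ) = 0)
    (hC'mem : C' ∈ affineSpan ℝ ({A, B} : Set (EuclideanSpace ℝ (Fin 2))))
    (hC'perp : (inner ℝ (C - C') (B - A) : ℝ) = 0) :
    ∀ A'' B'' C'' : EuclideanSpace ℝ (Fin 2),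
      A'' ∈ segment ℝ B C → B'' ∈ segment ℝ C A → C'' ∈ segment ℝ A B →
      dist A' B' + dist B' C' + dist C' A' ≤
        dist A'' B'' + dist B'' C'' + dist C'' A'' := by
  intro A'' B'' C'' hA'' hB'' hC''
  -- acute angles give positive inner ℝ products
  have hpA : 0 < (inner ℝ (B - A) (C - A) : ℝ) := by
    apply inner_pos_of_angle_lt
    simpa [EuclideanGeometry.angle, vsub_eq_sub] using hacuteA
  have hpB : 0 < (inner ℝ (A - B) (C - B) : ℝ) := by
    apply inner_pos_of_angle_lt
    simpa [EuclideanGeometry.angle, vsub_eq_sub] using hacuteB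
  have hpC : 0 < (inner ℝ (B - C) (A - C) : ℝ) := by
    apply inner_pos_of_angle_lt
    simpa [EuclideanGeometry.angle, vsub_eq_sub] using hacuteC
  set u : EuclideanSpace ℝ (Fin 2) := B - A with hu
  set v : EuclideanSpace ℝ (Fin 2) := C - A with hv
  set p : ℝ := inner ℝ u v with hpdef
  set c2 : ℝ := inner ℝ u u with hc2
  set b2 : ℝ := inner ℝ v v with hb2
  have expand : ∀ α β γ δ : ℝ, (inner ℝ (α•u + β•v) (γ•u + δ•v) : ℝ)
      = α*γ*c2 + (α*δ+β*γ)*p + β*δ*b2 := by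
    intro α β γ δ
    rw [inner_comb, hc2, hpdef, hb2]
  have heAB : A - B = (-1:ℝ)•u + (0:ℝ)•v := by rw [hu, hv]; module
  have heCB : C - B = (-1:ℝ)•u + (1:ℝ)•v := by rw [hu, hv]; module
  have heBC : B - C = (1:ℝ)•u + (-1:ℝ)•v := by rw [hu, hv]; module
  have heAC : A - C = (0:ℝ)•u + (-1:ℝ)•v := by rw [hu, hv]; module
  have hq : 0 < c2 - p := by
    have h := hpB
    rw [heAB, heCB, expand] at h
    linarith
  have hr : 0 < b2 - p := by
    have h := hpC
    rw [heBC, heAC, expand] at h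
    linarith
  have hp : 0 < p := hpA
  have hc2pos : 0 < c2 := by linarith
  have hb2pos : 0 < b2 := by linarith
  have ha2pos : 0 < b2 + c2 - 2*p := by linarith
  have hKpos : 0 < b2*c2 - p^2 := by nlinarith
  have hc2ne : c2 ≠ 0 := hc2pos.ne'
  have hb2ne : b2 ≠ 0 := hb2pos.ne'
  have ha2ne : b2 + c2 - 2*p ≠ 0 := ha2pos.ne'
  have ha2ne' : b2 + c2 - p*2 ≠ 0 := by rwa [mul_comm]
  -- square roots
  set sa : ℝ := Real.sqrt (b2 + c2 - 2*p) with hsa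
  set sb : ℝ := Real.sqrt b2 with hsb
  set sc : ℝ := Real.sqrt c2 with hsc
  set K : ℝ := Real.sqrt (b2*c2 - p^2) with hK
  have hsa2 : sa^2 = b2 + c2 - 2*p := Real.sq_sqrt ha2pos.le
  have hsb2 : sb^2 = b2 := Real.sq_sqrt hb2pos.le
  have hsc2 : sc^2 = c2 := Real.sq_sqrt hc2pos.le
  have hK2 : K^2 = b2*c2 - p^2 := Real.sq_sqrt hKpos.le
  have hsapos : 0 < sa := Real.sqrt_pos.mpr ha2pos
  have hsbpos : 0 < sb := Real.sqrt_pos.mpr hb2pos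
  have hscpos : 0 < sc := Real.sqrt_pos.mpr hc2pos
  have hKnn : 0 ≤ K := Real.sqrt_nonneg _
  have hsa0 : sa ≠ 0 := hsapos.ne'
  have hsb0 : sb ≠ 0 := hsbpos.ne'
  have hsc0 : sc ≠ 0 := hscpos.ne'
  -- determine the feet of the altitudes
  have hA'val : A' = B + ((c2-p)/(b2+c2-2*p)) • (v - u) := by
    obtain ⟨t, ht⟩ := vadd_left_mem_affineSpan_pair.mp
      (show (A' -ᵥ B) +ᵥ B ∈ line[ℝ, B, C] by simpa using hA'mem)
    have h1 : t • (C - B) = A' - B := by simpa [vsub_eq_sub] using ht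
    have hA'eq : A' = B + t • (v - u) := by
      have h2 : v - u = C - B := by rw [hu, hv]; abel
      rw [h2, h1]; abel
    have hAA' : A - A' = (t-1)•u + (-t)•v := by rw [hA'eq, hu, hv]; module
    rw [hAA', heCB, expand] at hA'perp
    have htval : t = (c2-p)/(b2+c2-2*p) := by
      field_simp
      linarith [hA'perp]
    rw [hA'eq, htval]
  have hB'val : B' = A + (p/b2) • v := by
    obtain ⟨t, ht⟩ := vadd_left_mem_affineSpan_pair.mp
      (show (B' -ᵥ C) +ᵥ C ∈ line[ℝ, C, A] by simpa using hB'mem)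
    have h1 : t • (A - C) = B' - C := by simpa [vsub_eq_sub] using ht
    have hB'eq : B' = C + t • (-v) := by
      have h2 : -v = A - C := by rw [hv]; abel
      rw [h2, h1]; abel
    have hBB' : B - B' = (1:ℝ)•u + (t-1)•v := by rw [hB'eq, hu, hv]; module
    rw [hBB', heAC, expand] at hB'perp
    have htval : t = (b2-p)/b2 := by
      field_simp
      linarith [hB'perp]
    have h3 : C = A + (1:ℝ)•v := by rw [hv]; module
    rw [hB'eq, htval, h3]
    match_scalars <;> (field_simp; try ring)
  have hC'val : C' = A + (p/c2) • u := by
    obtain ⟨t, ht⟩ := vadd_left_mem_affineSpan_pair.mp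
      (show (C' -ᵥ A) +ᵥ A ∈ line[ℝ, A, B] by simpa using hC'mem)
    have h1 : t • u = C' - A := by rw [hu]; simpa [vsub_eq_sub] using ht
    have hC'eq : C' = A + t • u := by rw [h1]; abel
    have hCC' : C - C' = (-t)•u + (1:ℝ)•v := by rw [hC'eq, hu, hv]; module
    rw [hCC', inner_add_left, real_inner_smul_left, real_inner_smul_left,
      real_inner_comm u v, ← hpdef, ← hc2] at hC'perp
    have htval : t = p/c2 := by
      field_simp
      linarith [hC'perp]
    rw [hC'eq, htval]
  -- the three sides of the orthic triangle
  have dAB : dist A' B' = sc*(b2-p)/(sa*sb) := by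
    rw [dist_eq_norm]
    apply norm_eq_of_sq
      (div_nonneg (mul_nonneg hscpos.le (by linarith)) (mul_nonneg hsapos.le hsbpos.le))
    have e : A' - B' = ((b2-p)/(b2+c2-2*p))•u + ((c2-p)/(b2+c2-2*p) - p/b2)•v := by
      rw [hA'val, hB'val, hu, hv]
      match_scalars <;> (field_simp; try ring)
    rw [e, ← real_inner_self_eq_norm_sq, expand, div_pow, mul_pow, mul_pow, hsa2, hsb2, hsc2]
    field_simp
    ring
  have dBC : dist B' C' = p*sa/(sb*sc) := by
    rw [dist_eq_norm]
    apply norm_eq_of_sq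
      (div_nonneg (mul_nonneg hp.le hsapos.le) (mul_nonneg hsbpos.le hscpos.le))
    have e : B' - C' = (-(p/c2))•u + (p/b2)•v := by
      rw [hB'val, hC'val, hu, hv]
      match_scalars <;> (field_simp; try ring)
    rw [e, ← real_inner_self_eq_norm_sq, expand, div_pow, mul_pow, mul_pow, hsa2, hsb2, hsc2]
    field_simp
    ring
  have dCA : dist C' A' = sb*(c2-p)/(sc*sa) := by
    rw [dist_eq_norm]
    apply norm_eq_of_sq
      (div_nonneg (mul_nonneg hsbpos.le (by linarith)) (mul_nonneg hscpos.le hsapos.le))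
    have e : C' - A' = (p/c2 - 1 + (c2-p)/(b2+c2-2*p))•u + (-((c2-p)/(b2+c2-2*p)))•v := by
      rw [hA'val, hC'val, hu, hv]
      match_scalars <;> (field_simp; try ring)
    rw [e, ← real_inner_self_eq_norm_sq, expand, div_pow, mul_pow, mul_pow, hsa2, hsb2, hsc2]
    field_simp
    ring
  -- orthic perimeter in closed form
  have hsum : dist A' B' + dist B' C' + dist C' A' = 2*(K/(sb*sc))*(K/sa) := by
    have h1 : dist A' B' + dist B' C' + dist C' A'
        = (sc^2*(b2-p) + sa^2*p + sb^2*(c2-p))/(sa*sb*sc) := by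
      rw [dAB, dBC, dCA]
      field_simp
    have h2 : sc^2*(b2-p) + sa^2*p + sb^2*(c2-p) = 2*K^2 := by
      rw [hsa2, hsb2, hsc2, hK2]; ring
    rw [h1, h2]
    field_simp
  -- the inscribed triangle
  rw [segment_eq_image'] at hA'' hB'' hC''
  obtain ⟨s1, hs1, hA2⟩ := hA''
  obtain ⟨s2, hs2, hB2⟩ := hB''
  obtain ⟨s3, hs3, hC2⟩ := hC''
  -- distance from A to the line BC is minimized at the foot A'
  have hge : K/sa ≤ dist A A'' := by
    have e : A - A'' = (s1-1)•u + (-s1)•v := by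
      rw [← hA2, hu, hv]; module
    have h1 : (K/sa)^2 ≤ (dist A A'')^2 := by
      rw [div_pow, hK2, hsa2, dist_eq_norm, ← real_inner_self_eq_norm_sq, e, expand,
        div_le_iff₀ ha2pos]
      nlinarith [sq_nonneg (s1*(b2+c2-2*p) - (c2-p))]
    calc K/sa = Real.sqrt ((K/sa)^2) := (Real.sqrt_sq (div_nonneg hKnn hsapos.le)).symm
      _ ≤ Real.sqrt ((dist A A'')^2) := Real.sqrt_le_sqrt h1
      _ = dist A A'' := Real.sqrt_sq dist_nonneg
  -- reflection argument
  set x : EuclideanSpace ℝ (Fin 2) := A'' - A with hx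
  set xu : ℝ := inner ℝ x u with hxu
  set xv : ℝ := inner ℝ x v with hxv
  set xx : ℝ := inner ℝ x x with hxx
  have expandux : ∀ α β γ δ : ℝ, (inner ℝ (α•u + β•x) (γ•u + δ•x) : ℝ)
      = α*γ*c2 + (α*δ+β*γ)*xu + β*δ*xx := by
    intro α β γ δ
    rw [inner_comb u x, real_inner_comm x u, hc2, hxu, hxx]
  have expandvx : ∀ α β γ δ : ℝ, (inner ℝ (α•v + β•x) (γ•v + δ•x) : ℝ)
      = α*γ*b2 + (α*δ+β*γ)*xv + β*δ*xx := by
    intro α β γ δ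
    rw [inner_comb v x, real_inner_comm x v, hb2, hxv, hxx]
  set F : EuclideanSpace ℝ (Fin 2) := A + (2*xu/c2) • u - x with hF
  set G : EuclideanSpace ℝ (Fin 2) := A + (2*xv/b2) • v - x with hG
  have h5 : dist F C'' = dist C'' A'' := by
    rw [dist_eq_norm, dist_eq_norm]
    apply norm_eq_of_sq (norm_nonneg _)
    have e1 : F - C'' = (2*xu/c2 - s3)•u + (-1:ℝ)•x := by
      rw [hF, ← hC2, hu]; module
    have e2 : C'' - A'' = s3•u + (-1:ℝ)•x := by
      rw [← hC2, hu, hx]; module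
    rw [e1, e2, ← real_inner_self_eq_norm_sq, ← real_inner_self_eq_norm_sq,
      expandux, expandux]
    field_simp
    ring
  have h6 : dist B'' G = dist A'' B'' := by
    rw [dist_eq_norm, dist_eq_norm]
    apply norm_eq_of_sq (norm_nonneg _)
    have e1 : B'' - G = ((1-s2) - 2*xv/b2)•v + (1:ℝ)•x := by
      rw [hG, ← hB2, hv]; module
    have e2 : A'' - B'' = (-(1-s2))•v + (1:ℝ)•x := by
      rw [← hB2, hv, hx]; module
    rw [e1, e2, ← real_inner_self_eq_norm_sq, ← real_inner_self_eq_norm_sq,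
      expandvx, expandvx]
    field_simp
    ring
  have h7 : dist F G = 2*(K/(sb*sc))*(dist A A'') := by
    set f : EuclideanSpace ℝ (Fin 2) := (2*xu)•u - c2•x with hf
    set g : EuclideanSpace ℝ (Fin 2) := (2*xv)•v - b2•x with hg
    have hff := key2d u u x
    have hgg := key2d v v x
    have hfg := key2d u v x
    simp only [← hc2, ← hb2, ← hpdef, ← hxu, ← hxv, ← hxx, ← hf, ← hg] at hff hgg hfg
    have e5 : F - G = (1/c2)•f + (-(1/b2))•g := by
      rw [hF, hG, hf, hg]
      match_scalars <;> (field_simp; try ring)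
    have hdx : dist A A'' = ‖x‖ := by
      rw [dist_eq_norm, hx, norm_sub_rev]
    have hFG2 : (inner ℝ (F-G) (F-G) : ℝ) = 4*(b2*c2 - p^2)/(b2*c2)*xx := by
      rw [e5, inner_comb, hff, hgg, hfg]
      field_simp
      ring
    rw [dist_eq_norm]
    apply norm_eq_of_sq
      (mul_nonneg (mul_nonneg (by norm_num)
        (div_nonneg hKnn (mul_nonneg hsbpos.le hscpos.le))) dist_nonneg)
    have hrhs : (2*(K/(sb*sc))*(dist A A''))^2 = 4*(b2*c2-p^2)/(b2*c2)*xx := by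
      rw [hdx]
      have h9 : (2*(K/(sb*sc))*‖x‖)^2 = 4*(K^2/(sb^2*sc^2))*(‖x‖^2) := by ring
      rw [h9, hK2, hsb2, hsc2, ← real_inner_self_eq_norm_sq, ← hxx]
      ring
    rw [← real_inner_self_eq_norm_sq, hFG2, hrhs]
  have tri : dist F G ≤ dist F C'' + dist C'' B'' + dist B'' G := dist_triangle4 F C'' B'' G
  calc dist A' B' + dist B' C' + dist C' A' = 2*(K/(sb*sc))*(K/sa) := hsum
    _ ≤ 2*(K/(sb*sc))*(dist A A'') := by
        apply mul_le_mul_of_nonneg_left hge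
        exact mul_nonneg (by norm_num) (div_nonneg hKnn (mul_nonneg hsbpos.le hscpos.le))
    _ = dist F G := h7.symm
    _ ≤ dist F C'' + dist C'' B'' + dist B'' G := tri
    _ = dist A'' B'' + dist B'' C'' + dist C'' A'' := by
        rw [h5, h6, dist_comm C'' B'', dist_comm C'' A'']
        ring
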